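/- Let t̂, f̂, σ_t, σ_f be real numbers with 0 < σ_t < t̂ and 0 < σ_f < f̂, and let Δ = sup_{η ∈ (0,1)} (UB(η) − LB(η)) be the maximal uncertainty. With CV_TPR = σ_t/t̂ and CV_FPR = σ_f/f̂, the following identity holds: ((1 − CV_FPR)/(1 + CV_FPR)) · ((1 − CV_TPR)/(1 + CV_TPR)) = ((1 − Δ)/(1 + Δ))². -/

import Mathlib

open Set

/-- Precision as a function of positive class prevalence `η`, TPR `t` and FPR `f`. -/
noncomputable def Prec (η t f : ℝ) : ℝ := η * t / (η * t + (1 - η) * f)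

/-- Upper bound `UB(η)`: supremum of precision over the confidence intervals. -/
noncomputable def UB (th σt fh σf η : ℝ) : ℝ :=
  sSup {p : ℝ | ∃ t ∈ Ioo (th - σt) (th + σt), ∃ f ∈ Ioo (fh - σf) (fh + σf), p = Prec η t f}

/-- Lower bound `LB(η)`: infimum of precision over the confidence intervals. -/
noncomputable def LB (th σt fh σf η : ℝ) : ℝ :=
  sInf {p : ℝ | ∃ t ∈ Ioo (th - σt) (th + σt), ∃ f ∈ Ioo (fh - σf) (fh + σf), p = Prec η t f}

/-- The maximal uncertainty `Δ = sup_{η ∈ (0,1)} (UB(η) - LB(η))`. -/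
noncomputable def Delta (th σt fh σf : ℝ) : ℝ :=
  sSup {d : ℝ | ∃ η ∈ Ioo (0:ℝ) 1, d = UB th σt fh σf η - LB th σt fh σf η}

lemma prec_mono {η t f t' f' : ℝ} (hη0 : 0 < η) (hη1 : η < 1)
    (ht : 0 < t) (hf' : 0 < f') (htt : t ≤ t') (hff : f' ≤ f) :
    Prec η t f ≤ Prec η t' f' := by
  have hf0 : 0 < f := lt_of_lt_of_le hf' hff
  have ht'0 : 0 < t' := lt_of_lt_of_le ht htt
  have h1 : 0 < η * t + (1 - η) * f := by
    have : 0 < 1 - η := by linarith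
    positivity
  have h2 : 0 < η * t' + (1 - η) * f' := by
    have : 0 < 1 - η := by linarith
    positivity
  unfold Prec
  rw [div_le_div_iff₀ h1 h2]
  have key : t * f' ≤ t' * f := mul_le_mul htt hff hf'.le ht'0.le
  nlinarith [mul_pos hη0 (show (0:ℝ) < 1 - η by linarith)]

lemma UB_eq (th fh σt σf η : ℝ)
    (hσt : 0 < σt) (hth : σt < th) (hσf : 0 < σf) (hfh : σf < fh)
    (hη0 : 0 < η) (hη1 : η < 1) :
    UB th σt fh σf η = Prec η (th + σt) (fh - σf) := by
  have hb : 0 < fh - σf := by linarith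
  have hc : 0 < th - σt := by linarith
  have h1η : 0 < 1 - η := by linarith
  apply csSup_eq_of_forall_le_of_forall_lt_exists_gt
  · exact ⟨Prec η th fh, th, ⟨by linarith, by linarith⟩, fh, ⟨by linarith, by linarith⟩, rfl⟩
  · rintro p ⟨t, ⟨ht1, ht2⟩, f, ⟨hf1, hf2⟩, rfl⟩
    exact prec_mono hη0 hη1 (by linarith) hb ht2.le hf1.le
  · intro w hw
    set F : ℝ → ℝ := fun ε => Prec η (th + σt - ε) (fh - σf + ε) with hF
    have hden : η * (th + σt - 0) + (1 - η) * (fh - σf + 0) ≠ 0 := by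
      have : 0 < η * (th + σt) + (1 - η) * (fh - σf) :=
        add_pos (mul_pos hη0 (by linarith)) (mul_pos h1η hb)
      simpa using this.ne'
    have hcont : ContinuousAt F 0 := by
      apply ContinuousAt.div
      · fun_prop
      · fun_prop
      · exact hden
    have hF0 : F 0 = Prec η (th + σt) (fh - σf) := by simp [hF, Prec]
    have htend : Filter.Tendsto F (nhdsWithin 0 (Ioi 0)) (nhds (Prec η (th + σt) (fh - σf))) := by
      rw [← hF0]
      exact hcont.continuousWithinAt.tendsto
    have h1 : ∀ᶠ ε in nhdsWithin 0 (Ioi 0), w < F ε :=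
      htend.eventually (eventually_gt_nhds hw)
    have h2 : ∀ᶠ ε in nhdsWithin 0 (Ioi 0), ε ∈ Ioo (0:ℝ) (min σt σf) := by
      apply Ioo_mem_nhdsGT_of_mem
      exact ⟨le_refl _, lt_min hσt hσf⟩
    obtain ⟨ε, hwε, hε0, hεm⟩ := (h1.and h2).exists
    refine ⟨F ε, ⟨th + σt - ε, ⟨by
      have := lt_of_lt_of_le hεm (min_le_left σt σf); linarith, by linarith⟩,
      fh - σf + ε, ⟨by linarith, by
      have := lt_of_lt_of_le hεm (min_le_right σt σf); linarith⟩, rfl⟩, hwε⟩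

lemma LB_eq (th fh σt σf η : ℝ)
    (hσt : 0 < σt) (hth : σt < th) (hσf : 0 < σf) (hfh : σf < fh)
    (hη0 : 0 < η) (hη1 : η < 1) :
    LB th σt fh σf η = Prec η (th - σt) (fh + σf) := by
  have hb : 0 < fh - σf := by linarith
  have hc : 0 < th - σt := by linarith
  have h1η : 0 < 1 - η := by linarith
  apply csInf_eq_of_forall_ge_of_forall_gt_exists_lt
  · exact ⟨Prec η th fh, th, ⟨by linarith, by linarith⟩, fh, ⟨by linarith, by linarith⟩, rfl⟩
  · rintro p ⟨t, ⟨ht1, ht2⟩, f, ⟨hf1, hf2⟩, rfl⟩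
    exact prec_mono hη0 hη1 hc (by linarith) ht1.le hf2.le
  · intro w hw
    set F : ℝ → ℝ := fun ε => Prec η (th - σt + ε) (fh + σf - ε) with hF
    have hden : η * (th - σt + 0) + (1 - η) * (fh + σf - 0) ≠ 0 := by
      have : 0 < η * (th - σt) + (1 - η) * (fh + σf) :=
        add_pos (mul_pos hη0 hc) (mul_pos h1η (by linarith))
      simpa using this.ne'
    have hcont : ContinuousAt F 0 := by
      apply ContinuousAt.div
      · fun_prop
      · fun_prop
      · exact hden
    have hF0 : F 0 = Prec η (th - σt) (fh + σf) := by simp [hF, Prec]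
    have htend : Filter.Tendsto F (nhdsWithin 0 (Ioi 0)) (nhds (Prec η (th - σt) (fh + σf))) := by
      rw [← hF0]
      exact hcont.continuousWithinAt.tendsto
    have h1 : ∀ᶠ ε in nhdsWithin 0 (Ioi 0), F ε < w :=
      htend.eventually (eventually_lt_nhds hw)
    have h2 : ∀ᶠ ε in nhdsWithin 0 (Ioi 0), ε ∈ Ioo (0:ℝ) (min σt σf) := by
      apply Ioo_mem_nhdsGT_of_mem
      exact ⟨le_refl _, lt_min hσt hσf⟩
    obtain ⟨ε, hwε, hε0, hεm⟩ := (h1.and h2).exists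
    refine ⟨F ε, ⟨th - σt + ε, ⟨by linarith, by
      have := lt_of_lt_of_le hεm (min_le_left σt σf); linarith⟩,
      fh + σf - ε, ⟨by
      have := lt_of_lt_of_le hεm (min_le_right σt σf); linarith, by linarith⟩, rfl⟩, hwε⟩

lemma prec_crit (a b p q s u : ℝ) (ha : 0 < a) (hb : 0 < b)
    (hp0 : 0 < p) (hq0 : 0 < q) (hs0 : 0 < s) (hu0 : 0 < u)
    (key : a*u*q = b*p*s) :
    Prec (u/(u+s)) a b = p/(p+q) := by
  have hus : (0:ℝ) < u + s := by linarith
  unfold Prec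
  have h1 : (1 : ℝ) - u/(u+s) = s/(u+s) := by field_simp; ring
  rw [h1]
  have h2 : u/(u+s)*a + s/(u+s)*b = (u*a+s*b)/(u+s) := by ring
  have h3 : u/(u+s)*a = (u*a)/(u+s) := by ring
  rw [h2, h3]
  rw [div_eq_div_iff (by positivity) (by positivity)]
  field_simp
  linear_combination key

lemma prec_ub (a b c d p q s u η : ℝ) (ha : 0 < a) (hb : 0 < b) (hc : 0 < c) (hd : 0 < d)
    (hp2 : p^2 = a*d) (hq2 : q^2 = b*c) (hs2 : s^2 = a*c) (hu2 : u^2 = b*d)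
    (hpq : p*q = s*u) (hqp : q < p) (hq0 : 0 < q)
    (hη0 : 0 < η) (hη1 : η < 1) :
    Prec η a b - Prec η c d ≤ (p - q)/(p + q) := by
  have h1η : 0 < 1 - η := by linarith
  have hD1 : 0 < η*a + (1-η)*b := by positivity
  have hD2 : 0 < η*c + (1-η)*d := by positivity
  have hp0 : 0 < p := lt_trans hq0 hqp
  unfold Prec
  rw [div_sub_div _ _ hD1.ne' hD2.ne', div_le_div_iff₀ (mul_pos hD1 hD2) (by linarith)]
  have expand : (p - q) * ((η*a + (1-η)*b) * (η*c + (1-η)*d))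
      - (η*a*(η*c + (1-η)*d) - (η*a + (1-η)*b)*(η*c))*(p+q)
      = (p - q) * (η*s - (1-η)*u)^2 := by
    linear_combination (-(η^2)*(p-q))*hs2 + (-((1-η)^2)*(p-q))*hu2
      + (2*q*η*(1-η))*hp2 + (-(2*p*η*(1-η)))*hq2 + (-(2*η*(1-η))*(p-q))*hpq
  nlinarith [expand, mul_nonneg (show (0:ℝ) ≤ p - q by linarith) (sq_nonneg (η*s - (1-η)*u))]

lemma Delta_eq (th fh σt σf : ℝ)
    (hσt : 0 < σt) (hth : σt < th) (hσf : 0 < σf) (hfh : σf < fh) :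
    Delta th σt fh σf =
      (Real.sqrt ((th + σt) * (fh + σf)) - Real.sqrt ((fh - σf) * (th - σt))) /
      (Real.sqrt ((th + σt) * (fh + σf)) + Real.sqrt ((fh - σf) * (th - σt))) := by
  set a := th + σt with ha'
  set b := fh - σf with hb'
  set c := th - σt with hc'
  set d := fh + σf with hd'
  have ha : 0 < a := by simp only [ha']; linarith
  have hb : 0 < b := by simp only [hb']; linarith
  have hc : 0 < c := by simp only [hc']; linarith
  have hd : 0 < d := by simp only [hd']; linarith
  set p := Real.sqrt (a*d) with hp'
  set q := Real.sqrt (b*c) with hq'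
  set s := Real.sqrt (a*c) with hs'
  set u := Real.sqrt (b*d) with hu'
  have hp0 : 0 < p := Real.sqrt_pos.mpr (by positivity)
  have hq0 : 0 < q := Real.sqrt_pos.mpr (by positivity)
  have hs0 : 0 < s := Real.sqrt_pos.mpr (by positivity)
  have hu0 : 0 < u := Real.sqrt_pos.mpr (by positivity)
  have hp2 : p^2 = a*d := Real.sq_sqrt (by positivity)
  have hq2 : q^2 = b*c := Real.sq_sqrt (by positivity)
  have hs2 : s^2 = a*c := Real.sq_sqrt (by positivity)
  have hu2 : u^2 = b*d := Real.sq_sqrt (by positivity)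
  have hpq : p*q = s*u := by
    rw [hp', hq', hs', hu', ← Real.sqrt_mul (by positivity), ← Real.sqrt_mul (by positivity)]
    ring_nf
  have hadbc : b*c < a*d := by
    simp only [ha', hb', hc', hd']
    nlinarith
  have hqp : q < p := by
    have hsq : q^2 < p^2 := by rw [hp2, hq2]; exact hadbc
    exact lt_of_pow_lt_pow_left₀ 2 hp0.le hsq
  have key1 : a*u*q = b*p*s := by
    have h1 : (a*u*q)^2 = (b*p*s)^2 := by
      have e1 : (a*u*q)^2 = a^2*u^2*q^2 := by ring
      have e2 : (b*p*s)^2 = b^2*p^2*s^2 := by ring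
      rw [e1, e2, hu2, hq2, hp2, hs2]; ring
    have h2 : a*u*q = Real.sqrt ((a*u*q)^2) := (Real.sqrt_sq (by positivity)).symm
    rw [h2, h1, Real.sqrt_sq (by positivity)]
  have key2 : c*u*p = d*q*s := by
    have h1 : (c*u*p)^2 = (d*q*s)^2 := by
      have e1 : (c*u*p)^2 = c^2*u^2*p^2 := by ring
      have e2 : (d*q*s)^2 = d^2*q^2*s^2 := by ring
      rw [e1, e2, hu2, hq2, hp2, hs2]; ring
    have h2 : c*u*p = Real.sqrt ((c*u*p)^2) := (Real.sqrt_sq (by positivity)).symm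
    rw [h2, h1, Real.sqrt_sq (by positivity)]
  have hus : (0:ℝ) < u + s := by linarith
  have hηmem : u/(u+s) ∈ Ioo (0:ℝ) 1 := by
    constructor
    · positivity
    · rw [div_lt_one hus]; linarith
  apply IsGreatest.csSup_eq
  constructor
  · refine ⟨u/(u+s), hηmem, ?_⟩
    rw [UB_eq th fh σt σf _ hσt hth hσf hfh hηmem.1 hηmem.2,
        LB_eq th fh σt σf _ hσt hth hσf hfh hηmem.1 hηmem.2]
    have hub : Prec (u/(u+s)) a b = p/(p+q) :=
      prec_crit a b p q s u ha hb hp0 hq0 hs0 hu0 key1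
    have hlb : Prec (u/(u+s)) c d = q/(p+q) := by
      have := prec_crit c d q p s u hc hd hq0 hp0 hs0 hu0 (by linear_combination key2)
      rw [this, add_comm q p]
    rw [hub, hlb, div_sub_div_same]
  · rintro x ⟨η, ⟨hη0, hη1⟩, rfl⟩
    rw [UB_eq th fh σt σf _ hσt hth hσf hfh hη0 hη1,
        LB_eq th fh σt σf _ hσt hth hσf hfh hη0 hη1]
    exact prec_ub a b c d p q s u η ha hb hc hd hp2 hq2 hs2 hu2 hpq hqp hq0 hη0 hη1

/-- identity relating the coefficients of variation and the maximal
uncertainty `Δ`. -/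
theorem cv_delta_identity (th fh σt σf : ℝ)
    (hσt : 0 < σt) (hth : σt < th) (hσf : 0 < σf) (hfh : σf < fh) :
    ((1 - σf / fh) / (1 + σf / fh)) * ((1 - σt / th) / (1 + σt / th)) =
      ((1 - Delta th σt fh σf) / (1 + Delta th σt fh σf)) ^ 2 := by
  rw [Delta_eq th fh σt σf hσt hth hσf hfh]
  set p := Real.sqrt ((th + σt) * (fh + σf)) with hp'
  set q := Real.sqrt ((fh - σf) * (th - σt)) with hq'
  have hp0 : 0 < p := Real.sqrt_pos.mpr (by nlinarith)
  have hq0 : 0 < q := Real.sqrt_pos.mpr (by nlinarith)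
  have hp2 : p^2 = (th + σt) * (fh + σf) := Real.sq_sqrt (by nlinarith)
  have hq2 : q^2 = (fh - σf) * (th - σt) := Real.sq_sqrt (by nlinarith)
  have hpq : (0:ℝ) < p + q := by linarith
  have h1 : 1 - (p - q)/(p + q) = 2*q/(p + q) := by
    field_simp
    ring
  have h2 : 1 + (p - q)/(p + q) = 2*p/(p + q) := by
    field_simp
    ring
  have h3 : (2*q/(p + q)) / (2*p/(p + q)) = q/p := by
    rw [div_div_div_eq, div_eq_div_iff (by positivity) hp0.ne']
    ring
  rw [h1, h2, h3, div_pow, hp2, hq2]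
  have hth0 : (0:ℝ) < th := by linarith
  have hfh0 : (0:ℝ) < fh := by linarith
  have hd1 : (1:ℝ) + σf / fh ≠ 0 := by positivity
  have hd2 : (1:ℝ) + σt / th ≠ 0 := by positivity
  have e1 : (1 - σf/fh)/(1 + σf/fh) = (fh - σf)/(fh + σf) := by
    rw [div_eq_div_iff hd1 (by positivity : (0:ℝ) < fh + σf).ne']
    field_simp
  have e2 : (1 - σt/th)/(1 + σt/th) = (th - σt)/(th + σt) := by
    rw [div_eq_div_iff hd2 (by positivity : (0:ℝ) < th + σt).ne']
    field_simp
  rw [e1, e2, div_mul_div_comm, mul_comm (th + σt) (fh + σf)]
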